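/- Let β, ρ, μ, d, τ be real numbers and let S, I, R : J → ℝ be differentiable on an open interval J and satisfy Ṡ = −βSI, İ = βSI − (ρ+μ)I, Ṙ = ρI − dR on J. Then for every λ > 0, the scaled functions S̃ = λS, Ĩ = λI, R̃ = R satisfy the same system of equations with the transformed parameters β̃ = β/λ, ρ̃ = ρ/λ, μ̃ = μ + ρ(1 − 1/λ), d̃ = d, and the output is unchanged: ρ̃ Ĩ(t) + τ = ρ I(t) + τ for all t ∈ J. (Hence in this model with constant parameters, β, ρ, μ are structurally unidentifiable and S, I are unobservable from the output y = ρI + τ.) -/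

import Mathlib

theorem sir15_scaling_symmetry (β ρ μ d τ a b : ℝ) (S I R : ℝ → ℝ)
    (hS : ∀ t ∈ Set.Ioo a b, HasDerivAt S (-β * S t * I t) t)
    (hI : ∀ t ∈ Set.Ioo a b, HasDerivAt I (β * S t * I t - (ρ + μ) * I t) t)
    (hR : ∀ t ∈ Set.Ioo a b, HasDerivAt R (ρ * I t - d * R t) t) :
    ∀ l : ℝ, 0 < l → ∀ t ∈ Set.Ioo a b,
      HasDerivAt (fun s => l * S s) (-(β / l) * (l * S t) * (l * I t)) t ∧
      HasDerivAt (fun s => l * I s)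
        ((β / l) * (l * S t) * (l * I t) - ((ρ / l) + (μ + ρ * (1 - 1 / l))) * (l * I t)) t ∧
      HasDerivAt R ((ρ / l) * (l * I t) - d * R t) t ∧
      (ρ / l) * (l * I t) + τ = ρ * I t + τ := by
  intro l hl t ht
  have hl0 : l ≠ 0 := ne_of_gt hl
  refine ⟨?_, ?_, ?_, ?_⟩
  · have := (hS t ht).const_mul l
    convert this using 1
    · rfl
    · rfl
    field_simp
  · have := (hI t ht).const_mul l
    convert this using 1
    · rfl
    · rfl
    field_simp; ring
  · have := hR t ht
    convert this using 1
    field_simp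
  · field_simp
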